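/- Define Sₙ as the n-th derivative at 0 of the function x ↦ x·cot x (extended analytically with value 1 at 0). Then S₀ = 1, S₁ = 0, and for n > 2, (n+1)Sₙ = -∑_{r=1}^{n-1} C(n,r) S_r S_{n-r}. Moreover Sₙ = 0 for odd n. -/

import Mathlib

noncomputable def xCot (x : ℝ) : ℝ := if x = 0 then 1 else x * Real.cot x

noncomputable def S (n : ℕ) : ℝ := iteratedDeriv n xCot 0

open Filter Topology

-- sin and cos analytic (real)
lemma analyticAt_rsin (x : ℝ) : AnalyticAt ℝ Real.sin x := by
  have hc : AnalyticAt ℂ Complex.sin (x : ℂ) := by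
    exact Complex.differentiable_sin.analyticAt _
  have hr : AnalyticAt ℝ Complex.sin (x : ℂ) := hc.restrictScalars
  have h1 : AnalyticAt ℝ (fun y : ℝ => Complex.sin y) x :=
    hr.comp (Complex.ofRealCLM.analyticAt x)
  have h2 : AnalyticAt ℝ (fun y : ℝ => (Complex.sin y).re) x :=
    (Complex.reCLM.analyticAt _).comp h1
  refine h2.congr ?_
  filter_upwards with y
  simp [← Complex.ofReal_sin]

lemma analyticAt_rcos (x : ℝ) : AnalyticAt ℝ Real.cos x := by
  have hc : AnalyticAt ℂ Complex.cos (x : ℂ) := by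
    exact Complex.differentiable_cos.analyticAt _
  have hr : AnalyticAt ℝ Complex.cos (x : ℂ) := hc.restrictScalars
  have h1 : AnalyticAt ℝ (fun y : ℝ => Complex.cos y) x :=
    hr.comp (Complex.ofRealCLM.analyticAt x)
  have h2 : AnalyticAt ℝ (fun y : ℝ => (Complex.cos y).re) x :=
    (Complex.reCLM.analyticAt _).comp h1
  refine h2.congr ?_
  filter_upwards with y
  simp [← Complex.ofReal_cos]

noncomputable def A : ℝ → ℝ := dslope Real.sin 0

lemma A_zero : A 0 = 1 := by
  simp [A, dslope, Real.deriv_sin]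

lemma A_apply {x : ℝ} (hx : x ≠ 0) : A x = Real.sin x / x := by
  simp [A, dslope_of_ne _ hx, slope_def_field, div_eq_div_iff]

lemma analyticAt_A : AnalyticAt ℝ A 0 := by
  obtain ⟨p, hp⟩ := analyticAt_rsin 0
  exact ⟨p.fslope, hp.has_fpower_series_dslope_fslope⟩

lemma xCot_eq : xCot = fun x => Real.cos x / A x := by
  funext x
  rcases eq_or_ne x 0 with rfl | hx
  · simp [xCot, A_zero]
  · rw [xCot, if_neg hx, A_apply hx, Real.cot_eq_cos_div_sin, div_div_eq_mul_div]
    ring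

lemma analyticAt_xCot : AnalyticAt ℝ xCot 0 := by
  rw [xCot_eq]
  exact (analyticAt_rcos 0).div analyticAt_A (by simp [A_zero])

lemma master {F : ℝ → ℝ} {u : ℕ → ℝ}
    (h : ∀ᶠ z in 𝓝 (0:ℝ), HasSum (fun n => u n * z ^ n) (F z)) (n : ℕ) :
    iteratedDeriv n F 0 = (n.factorial : ℝ) * u n := by
  have hco : ∀ m, (FormalMultilinearSeries.ofScalars ℝ u).coeff m = u m := by
    intro m
    have h1 := FormalMultilinearSeries.ofScalars_apply_eq (c := u) (E := ℝ) (1:ℝ) m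
    rw [one_pow, smul_eq_mul, mul_one] at h1
    exact h1
  have hc : HasFPowerSeriesAt F (FormalMultilinearSeries.ofScalars ℝ u) 0 := by
    rw [hasFPowerSeriesAt_iff]
    filter_upwards [h] with z hz
    have : (fun n => z ^ n • (FormalMultilinearSeries.ofScalars ℝ u).coeff n)
        = fun n => u n * z ^ n := by
      funext n
      rw [hco n, smul_eq_mul, mul_comm]
    rw [this]
    simpa using hz
  obtain ⟨r, hr⟩ := hc
  have key := hr.factorial_smul (1 : ℝ) n
  rw [iteratedDeriv_eq_iteratedFDeriv, ← key]
  have : (FormalMultilinearSeries.ofScalars ℝ u n) (fun _ => (1:ℝ)) = u n := hco n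
  rw [this, nsmul_eq_mul]

lemma exists_coeffs {F : ℝ → ℝ} (hF : AnalyticAt ℝ F 0) :
    ∃ u : ℕ → ℝ, ∀ᶠ z in 𝓝 (0:ℝ),
      HasSum (fun n => u n * z ^ n) (F z) ∧ Summable (fun n => ‖u n * z ^ n‖) := by
  obtain ⟨p, r, hp⟩ := hF
  refine ⟨p.coeff, ?_⟩
  have h1 : ∀ᶠ z in 𝓝 (0:ℝ), HasSum (fun n => z ^ n • p.coeff n) (F (0 + z)) :=
    hasFPowerSeriesAt_iff.mp ⟨r, hp⟩
  filter_upwards [h1, EMetric.ball_mem_nhds (0:ℝ) hp.r_pos] with z hz hzb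
  constructor
  · have : (fun n => p.coeff n * z ^ n) = fun n => z ^ n • p.coeff n := by
      funext n; rw [smul_eq_mul, mul_comm]
    rw [this]
    simpa using hz
  · have hzb' : z ∈ EMetric.ball (0:ℝ) p.radius := EMetric.ball_subset_ball hp.r_le hzb
    have := p.summable_norm_apply hzb'
    refine this.congr fun n => ?_
    rw [p.apply_eq_pow_smul_coeff, smul_eq_mul, mul_comm]

lemma sin_ne_zero_of_mem {z : ℝ} (h1 : -Real.pi < z) (h2 : z < Real.pi) (hz : z ≠ 0) :
    Real.sin z ≠ 0 := by
  rcases lt_or_gt_of_ne hz with h | h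
  · have : Real.sin (-z) > 0 := Real.sin_pos_of_pos_of_lt_pi (by linarith) (by linarith)
    rw [Real.sin_neg] at this
    linarith
  · have : Real.sin z > 0 := Real.sin_pos_of_pos_of_lt_pi h h2
    linarith

lemma funeq : ∀ᶠ z in 𝓝 (0:ℝ), z * deriv xCot z = xCot z - xCot z ^ 2 - z ^ 2 := by
  have hmem : Set.Ioo (-Real.pi) Real.pi ∈ 𝓝 (0:ℝ) :=
    Ioo_mem_nhds (by linarith [Real.pi_pos]) Real.pi_pos
  filter_upwards [hmem] with z hzio
  rcases eq_or_ne z 0 with rfl | hz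
  · simp [xCot]
  · have hs : Real.sin z ≠ 0 := sin_ne_zero_of_mem hzio.1 hzio.2 hz
    -- xCot agrees with y ↦ y * cos y / sin y near z
    have hev : xCot =ᶠ[𝓝 z] fun y => y * Real.cos y / Real.sin y := by
      filter_upwards [eventually_ne_nhds hz] with y hy
      rw [xCot, if_neg hy, Real.cot_eq_cos_div_sin, mul_div_assoc]
    have hder : HasDerivAt (fun y => y * Real.cos y / Real.sin y)
        (((1 * Real.cos z + z * -Real.sin z) * Real.sin z - z * Real.cos z * Real.cos z)
          / Real.sin z ^ 2) z :=
      ((hasDerivAt_id z).mul (Real.hasDerivAt_cos z)).div (Real.hasDerivAt_sin z) hs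
    have hd : deriv xCot z = ((1 * Real.cos z + z * -Real.sin z) * Real.sin z
        - z * Real.cos z * Real.cos z) / Real.sin z ^ 2 := by
      rw [hev.deriv_eq]
      exact hder.deriv
    have hx : xCot z = z * Real.cos z / Real.sin z := by
      rw [xCot, if_neg hz, Real.cot_eq_cos_div_sin, mul_div_assoc]
    rw [hd, hx]
    have hpy : Real.sin z ^ 2 + Real.cos z ^ 2 = 1 := Real.sin_sq_add_cos_sq z
    field_simp
    ring_nf

lemma xCot_even (z : ℝ) : xCot (-z) = xCot z := by
  rcases eq_or_ne z 0 with rfl | hz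
  · simp
  · rw [xCot, xCot, if_neg hz, if_neg (neg_ne_zero.mpr hz),
      Real.cot_eq_cos_div_sin, Real.cot_eq_cos_div_sin, Real.cos_neg, Real.sin_neg]
    ring

theorem xcot_derivative_numbers :
    S 0 = 1 ∧ S 1 = 0 ∧
      (∀ n : ℕ, 2 < n →
        ((n : ℝ) + 1) * S n =
          -∑ r ∈ Finset.Ico 1 n, ((n.choose r : ℝ)) * S r * S (n - r)) ∧
      ∀ n : ℕ, Odd n → S n = 0 := by
  obtain ⟨a, ha⟩ := exists_coeffs analyticAt_xCot
  have ha1 : ∀ᶠ z in 𝓝 (0:ℝ), HasSum (fun n => a n * z ^ n) (xCot z) :=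
    ha.mono fun z h => h.1
  have haS : ∀ n, S n = (n.factorial : ℝ) * a n := fun n => master ha1 n
  have hS0 : S 0 = 1 := by simp [S, xCot]
  have ha0 : a 0 = 1 := by
    have := haS 0
    rw [hS0] at this
    simpa using this.symm
  -- odd vanishing
  have hodd : ∀ n : ℕ, Odd n → S n = 0 := by
    have hneg : Tendsto (fun z : ℝ => -z) (𝓝 0) (𝓝 0) := by
      simpa using (continuous_neg.tendsto (0:ℝ))
    have h2 : ∀ᶠ z in 𝓝 (0:ℝ), HasSum (fun n => ((-1:ℝ) ^ n * a n) * z ^ n) (xCot z) := by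
      filter_upwards [hneg.eventually ha1] with z hz
      have : (fun n => ((-1:ℝ) ^ n * a n) * z ^ n) = fun n => a n * (-z) ^ n := by
        funext n; rw [neg_pow]; ring
      rw [this, ← xCot_even z]
      exact hz
    intro n hn
    have e1 := master h2 n
    have e2 := haS n
    rw [hn.neg_one_pow] at e1
    have e0 : S n = iteratedDeriv n xCot 0 := rfl
    have hfac : (n.factorial : ℝ) ≠ 0 := by positivity
    have heq : (n.factorial : ℝ) * a n = (n.factorial : ℝ) * (-1 * a n) := by
      rw [← e2, e0, e1]
    have han : a n = 0 := by
      have := mul_left_cancel₀ hfac heq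
      linarith
    rw [e2, han, mul_zero]
  -- derivative coefficients
  have hda : AnalyticAt ℝ (deriv xCot) 0 := by
    obtain ⟨s, hsm, hsa⟩ := analyticAt_xCot.eventually_analyticAt.exists_mem
    exact (AnalyticOnNhd.deriv (fun z hz => hsa z hz)) 0 (mem_of_mem_nhds hsm)
  obtain ⟨b, hb⟩ := exists_coeffs hda
  have hb1 : ∀ᶠ z in 𝓝 (0:ℝ), HasSum (fun n => b n * z ^ n) (deriv xCot z) :=
    hb.mono fun z h => h.1
  have hbn : ∀ n : ℕ, b n = ((n : ℝ) + 1) * a (n + 1) := by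
    intro n
    have e1 : iteratedDeriv n (deriv xCot) 0 = (n.factorial : ℝ) * b n := master hb1 n
    have e2 : iteratedDeriv (n+1) xCot 0 = ((n+1).factorial : ℝ) * a (n+1) := haS (n+1)
    rw [iteratedDeriv_succ', e1] at e2
    have hne : (n.factorial : ℝ) ≠ 0 := by positivity
    have : (n.factorial : ℝ) * b n = (n.factorial : ℝ) * (((n : ℝ) + 1) * a (n + 1)) := by
      rw [e2, Nat.factorial_succ]
      push_cast
      ring
    exact mul_left_cancel₀ hne this
  -- LHS coefficients
  set c : ℕ → ℝ := fun n => (n : ℝ) * a n with hc_def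
  have hc : ∀ᶠ z in 𝓝 (0:ℝ), HasSum (fun n => c n * z ^ n) (z * deriv xCot z) := by
    filter_upwards [hb1] with z hz
    have h1 : HasSum (fun n => c (n + 1) * z ^ (n + 1)) (z * deriv xCot z) := by
      have h0 := hz.mul_left z
      have hfe : (fun n => c (n + 1) * z ^ (n + 1)) = fun n => z * (b n * z ^ n) := by
        funext n
        simp only [hc_def, hbn n]
        push_cast
        ring
      rw [hfe]
      exact h0
    have h2 := (hasSum_nat_add_iff (f := fun n => c n * z ^ n) 1).mp h1
    simpa [hc_def] using h2
  -- square coefficients (Cauchy product)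
  set q : ℕ → ℝ := fun n => ∑ r ∈ Finset.range (n + 1), a r * a (n - r) with hq_def
  have hq : ∀ᶠ z in 𝓝 (0:ℝ), HasSum (fun n => q n * z ^ n) (xCot z ^ 2) := by
    filter_upwards [ha] with z hz
    obtain ⟨hz1, hz2⟩ := hz
    set f : ℕ → ℝ := fun n => a n * z ^ n with hf_def
    have hmul : Summable fun (x : ℕ × ℕ) => f x.1 * f x.2 :=
      summable_mul_of_summable_norm hz2 hz2
    have hsum2 : Summable fun n => ∑ kl ∈ Finset.HasAntidiagonal.antidiagonal n, f kl.1 * f kl.2 :=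
      summable_sum_mul_antidiagonal_of_summable_mul hmul
    have ht : ∑' n, ∑ kl ∈ Finset.HasAntidiagonal.antidiagonal n, f kl.1 * f kl.2 = (∑' n, f n) * (∑' n, f n) :=
      (tsum_mul_tsum_eq_tsum_sum_antidiagonal_of_summable_norm hz2 hz2).symm
    have hkey : HasSum (fun n => ∑ kl ∈ Finset.HasAntidiagonal.antidiagonal n, f kl.1 * f kl.2) (xCot z ^ 2) := by
      rw [(hsum2).hasSum_iff, ht, hz1.tsum_eq]
      ring
    have hfe : (fun n => ∑ kl ∈ Finset.HasAntidiagonal.antidiagonal n, f kl.1 * f kl.2)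
        = fun n => q n * z ^ n := by
      funext n
      rw [Finset.Nat.sum_antidiagonal_eq_sum_range_succ_mk, hq_def]
      simp only []
      rw [Finset.sum_mul]
      refine Finset.sum_congr rfl fun r hr => ?_
      have hrn : r ≤ n := Nat.lt_succ_iff.mp (Finset.mem_range.mp hr)
      simp only [hf_def]
      have hzp : z ^ r * z ^ (n - r) = z ^ n := by
        rw [← pow_add, Nat.add_sub_cancel' hrn]
      calc a r * z ^ r * (a (n - r) * z ^ (n - r))
          = a r * a (n - r) * (z ^ r * z ^ (n - r)) := by ring
        _ = a r * a (n - r) * z ^ n := by rw [hzp]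
    rw [← hfe]
    exact hkey
  -- RHS coefficients
  set d : ℕ → ℝ := fun n => a n - q n - (if n = 2 then 1 else 0) with hd_def
  have hd : ∀ᶠ z in 𝓝 (0:ℝ), HasSum (fun n => d n * z ^ n) (z * deriv xCot z) := by
    filter_upwards [ha1, hq, funeq] with z hz1 hz2 hz3
    have hE : HasSum (fun n => (if n = 2 then (1:ℝ) else 0) * z ^ n) (z ^ 2) := by
      have h0 : HasSum (fun n : ℕ => if n = 2 then z ^ 2 else 0) (z ^ 2) := hasSum_ite_eq 2 (z ^ 2)
      have hfe2 : (fun n => (if n = 2 then (1:ℝ) else 0) * z ^ n)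
          = fun n : ℕ => if n = 2 then z ^ 2 else 0 := by
        funext n
        split_ifs with h
        · rw [h, one_mul]
        · rw [zero_mul]
      rw [hfe2]
      exact h0
    rw [hz3]
    have hfin := (hz1.sub hz2).sub hE
    have hfe3 : (fun n => d n * z ^ n)
        = fun n => a n * z ^ n - q n * z ^ n - (if n = 2 then (1:ℝ) else 0) * z ^ n := by
      funext n
      simp only [hd_def]
      ring
    rw [hfe3]
    exact hfin
  -- equate coefficients
  have hcd : ∀ n, c n = d n := by
    intro n
    have e1 := master hc n
    have e2 := master hd n
    have hfac : (n.factorial : ℝ) ≠ 0 := by positivity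
    exact mul_left_cancel₀ hfac (by rw [← e1, ← e2])
  refine ⟨hS0, hodd 1 odd_one, ?_, hodd⟩
  intro n hn
  have h1 : (1:ℕ) ≤ n := by omega
  have key := hcd n
  have hne2 : n ≠ 2 := by omega
  -- compute q n
  have hqn : q n = a n + (∑ r ∈ Finset.Ico 1 n, a r * a (n - r)) + a n := by
    have e1 : ∑ r ∈ Finset.range (n + 1), a r * a (n - r)
        = (∑ r ∈ Finset.range n, a r * a (n - r)) + a n * a (n - n) :=
      Finset.sum_range_succ _ n
    have e2 : ∑ r ∈ Finset.range n, a r * a (n - r)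
        = a 0 * a (n - 0) + ∑ r ∈ Finset.Ico 1 n, a r * a (n - r) := by
      rw [Finset.range_eq_Ico]
      exact Finset.sum_eq_sum_Ico_succ_bot (by omega) _
    simp only [hq_def]
    rw [e1, e2, Nat.sub_self, Nat.sub_zero, ha0]
    ring
  have hcn : c n = (n : ℝ) * a n := rfl
  have hdn : d n = a n - q n := by
    simp only [hd_def, if_neg hne2]
    ring
  have hSigma : ∑ r ∈ Finset.Ico 1 n, a r * a (n - r) = -(((n:ℝ) + 1) * a n) := by
    rw [hcn, hdn, hqn] at key
    linarith
  -- final computation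
  have hterm : ∀ r ∈ Finset.Ico 1 n,
      ((n.choose r : ℝ)) * S r * S (n - r) = (n.factorial : ℝ) * (a r * a (n - r)) := by
    intro r hr
    obtain ⟨hr1, hr2⟩ := Finset.mem_Ico.mp hr
    have hrn : r ≤ n := le_of_lt hr2
    rw [haS r, haS (n - r)]
    have hcf : (n.choose r : ℝ) * (r.factorial : ℝ) * ((n - r).factorial : ℝ)
        = (n.factorial : ℝ) := by
      rw [← Nat.cast_mul, ← Nat.cast_mul, Nat.choose_mul_factorial_mul_factorial hrn]
    calc (n.choose r : ℝ) * ((r.factorial : ℝ) * a r) * (((n - r).factorial : ℝ) * a (n - r))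
        = ((n.choose r : ℝ) * (r.factorial : ℝ) * ((n - r).factorial : ℝ)) * (a r * a (n - r)) := by
          ring
      _ = (n.factorial : ℝ) * (a r * a (n - r)) := by rw [hcf]
  rw [Finset.sum_congr rfl hterm, ← Finset.mul_sum, hSigma, haS n]
  ring
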